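/- arXiv:1507.07397 — 2 statements merged into one kernel-verified Lean document; each statement's English description precedes it below -/
import Mathlib

section
/- Let Ω ∈ (0,1) be a quadratic irrational with purely periodic continued fraction, associated matrices T = [[a,b],[c,d]], U, and eigenvalue λ > 1. For any primitive integer q, the numerators along the resonant sequence satisfy γ_{s(q,n)} = γ*_q + O(λ^{−2n}) as n → ∞ (in particular γ_{s(q,n)} → γ*_q), where γ*_q = |r_q|·K_q with r_q = qΩ − p, z_q = cq + bpΩ, K_q = |z_q|(1+Ω)/|c+bΩ²|, and p = p⁰(q). -/
open Real Filter Matrix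

noncomputable section

/-- Orbit of the Gauss map `g(x) = {1/x}` starting at `Ω`:
`x₀ = Ω`, `x_{j+1} = g(x_j)`. -/
def gaussOrbit (Ω : ℝ) : ℕ → ℝ
  | 0 => Ω
  | j + 1 => Int.fract (1 / gaussOrbit Ω j)

/-- `cfA Ω j` is the partial quotient `a_{j+1}` of the continued fraction of `Ω`. -/
def cfA (Ω : ℝ) (j : ℕ) : ℤ := ⌊1 / gaussOrbit Ω j⌋

/-- The matrix `[[a, 1], [1, 0]]`. -/
def Acf (a : ℤ) : Matrix (Fin 2) (Fin 2) ℤ := !![a, 1; 1, 0]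

/-- The product `A₁ ⋯ A_m` with `A_i = [[a_i, 1], [1, 0]]`. -/
def cfMatProd (Ω : ℝ) (m : ℕ) : Matrix (Fin 2) (Fin 2) ℤ :=
  ((List.range m).map fun i => Acf (cfA Ω i)).prod

/-- `cfQ Ω (j+1) = q_j`:  `q₋₁ = 0`, `q₀ = 1`, `q_j = a_j q_{j-1} + q_{j-2}`. -/
def cfQ (Ω : ℝ) : ℕ → ℤ
  | 0 => 0
  | 1 => 1
  | j + 2 => cfA Ω j * cfQ Ω (j + 1) + cfQ Ω j

/-- `cfP Ω (j+1) = p_j`:  `p₋₁ = 1`, `p₀ = 0`, `p_j = a_j p_{j-1} + p_{j-2}`. -/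
def cfP (Ω : ℝ) : ℕ → ℤ
  | 0 => 1
  | 1 => 0
  | j + 2 => cfA Ω j * cfP Ω (j + 1) + cfP Ω j

/-- The vector convergent `w(j) = (q_j, p_j)`. -/
def wconv (Ω : ℝ) (j : ℕ) : Fin 2 → ℤ := ![cfQ Ω (j + 1), cfP Ω (j + 1)]

/-- The resonant convergent `v(j) = (−p_j, q_j)`. -/
def vconv (Ω : ℝ) (j : ℕ) : Fin 2 → ℤ := ![-cfP Ω (j + 1), cfQ Ω (j + 1)]

/-- A quadratic irrational number. -/
def IsQuadraticIrrational (Ω : ℝ) : Prop :=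
  Irrational Ω ∧ ∃ A B C : ℤ, A ≠ 0 ∧ (A : ℝ) * Ω ^ 2 + (B : ℝ) * Ω + (C : ℝ) = 0

end
noncomputable section

/-- `⟨k, ω⟩ = k₁ + k₂ Ω` for `ω = (1, Ω)`. -/
def pairω (Ω : ℝ) (k : Fin 2 → ℤ) : ℝ := (k 0 : ℝ) + (k 1 : ℝ) * Ω

/-- `|k|₁ = |k₁| + |k₂|`. -/
def norm1 (k : Fin 2 → ℤ) : ℤ := |k 0| + |k 1|

/-- `p⁰(q)`: the integer nearest to `qΩ`. -/
def p0 (Ω : ℝ) (q : ℤ) : ℤ := round ((q : ℝ) * Ω)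

/-- `k⁰(q) = (−p⁰(q), q)`. -/
def kzero (Ω : ℝ) (q : ℤ) : Fin 2 → ℤ := ![-p0 Ω q, q]

/-- The set `A` of quasi-resonances: vectors `k⁰(q)`, `q ≥ 1`, with `|⟨k,ω⟩| < 1/2`. -/
def inA (Ω : ℝ) (k : Fin 2 → ℤ) : Prop :=
  ∃ q : ℤ, 1 ≤ q ∧ k = kzero Ω q ∧ |pairω Ω k| < 1 / 2

/-- A quasi-resonance `k` is primitive if `U⁻¹k` is not a quasi-resonance. -/
def PrimitiveVec (Ω : ℝ) (U : Matrix (Fin 2) (Fin 2) ℤ) (k : Fin 2 → ℤ) : Prop :=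
  inA Ω k ∧ ¬inA Ω (U⁻¹.mulVec k)

/-- A primitive integer `q ≥ 1`. -/
def PrimitiveInt (Ω : ℝ) (U : Matrix (Fin 2) (Fin 2) ℤ) (q : ℤ) : Prop :=
  1 ≤ q ∧ PrimitiveVec Ω U (kzero Ω q)

/-- The resonant sequence `s(q, n) = Uⁿ k⁰(q)`. -/
def sres (Ω : ℝ) (U : Matrix (Fin 2) (Fin 2) ℤ) (q : ℤ) (n : ℕ) : Fin 2 → ℤ :=
  (U ^ n).mulVec (kzero Ω q)

/-- `U = σ (T⁻¹)ᵀ` with `σ = det T = (−1)^m` and `T = A₁⋯A_m`. -/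
def Umat (Ω : ℝ) (m : ℕ) : Matrix (Fin 2) (Fin 2) ℤ :=
  ((-1 : ℤ) ^ m) • ((cfMatProd Ω m)⁻¹)ᵀ

/-- The numerator `γ_k = |⟨k,ω⟩| · |k|₁`. -/
def gammaK (Ω : ℝ) (k : Fin 2 → ℤ) : ℝ := |pairω Ω k| * (norm1 k : ℝ)

/-- `K_q = |z_q|(1+Ω)/|c+bΩ²|`, where `z_q = cq + bpΩ`, `p = p⁰(q)`,
and `b, c` are the off-diagonal entries of `T = A₁⋯A_m = [[a,b],[c,d]]`. -/
def KqD (Ω : ℝ) (m : ℕ) (q : ℤ) : ℝ :=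
  |(cfMatProd Ω m 1 0 : ℝ) * (q : ℝ) + (cfMatProd Ω m 0 1 : ℝ) * (p0 Ω q : ℝ) * Ω| * (1 + Ω) /
    |(cfMatProd Ω m 1 0 : ℝ) + (cfMatProd Ω m 0 1 : ℝ) * Ω ^ 2|

/-- The limit numerator `γ*_q = |r_q| K_q` with `r_q = qΩ − p⁰(q)`. -/
def gammaStarQ (Ω : ℝ) (m : ℕ) (q : ℤ) : ℝ :=
  |(q : ℝ) * Ω - (p0 Ω q : ℝ)| * KqD Ω m q

end

section AuxSQ8
lemma det_Acf (a : ℤ) : (Acf a).det = -1 := by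
  simp [Acf, Matrix.det_fin_two_of]

lemma cfMatProd_succ (Ω : ℝ) (m : ℕ) :
    cfMatProd Ω (m+1) = cfMatProd Ω m * Acf (cfA Ω m) := by
  simp [cfMatProd, List.range_succ]

lemma det_cfMatProd (Ω : ℝ) (m : ℕ) : (cfMatProd Ω m).det = (-1)^m := by
  induction m with
  | zero => simp [cfMatProd]
  | succ n ih => rw [cfMatProd_succ, Matrix.det_mul, ih, det_Acf]; ring

lemma inv_cfMatProd (Ω : ℝ) (m : ℕ) :
    (cfMatProd Ω m)⁻¹ = ((-1:ℤ)^m) • (cfMatProd Ω m).adjugate := by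
  apply Matrix.inv_eq_right_inv
  rw [Matrix.mul_smul, Matrix.mul_adjugate, det_cfMatProd, smul_smul, ← pow_add]
  rw [Even.neg_one_pow ⟨m, rfl⟩, one_smul]

lemma Umat_eq (Ω : ℝ) (m : ℕ) :
    Umat Ω m = !![cfMatProd Ω m 1 1, -(cfMatProd Ω m 1 0);
                  -(cfMatProd Ω m 0 1), cfMatProd Ω m 0 0] := by
  have hss : ((-1:ℤ)^m) * ((-1:ℤ)^m) = 1 := by
    rw [← pow_add]; exact Even.neg_one_pow ⟨m, rfl⟩
  rw [Umat, inv_cfMatProd, Matrix.transpose_smul, smul_smul, hss, one_smul,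
    Matrix.adjugate_fin_two]
  ext i j
  fin_cases i <;> fin_cases j <;> simp [Matrix.transpose_apply]
end AuxSQ8
set_option maxHeartbeats 1600000 in
/-- Proposition 3(b): for a primitive `q`, the numerators along the resonant sequence
satisfy `γ_{s(q,n)} = γ*_q + O(λ^{−2n})`; in particular `γ_{s(q,n)} → γ*_q`. -/
theorem splitting_quadratic_stmt8
    (Ω : ℝ) (m : ℕ) (hm : 1 ≤ m) (h0 : 0 < Ω) (h1 : Ω < 1)
    (hquad : IsQuadraticIrrational Ω)
    (hper : gaussOrbit Ω m = Ω)
    (lam : ℝ) (hlam : 1 < lam)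
    (heig : ((cfMatProd Ω m).map fun z : ℤ => (z : ℝ)).mulVec ![1, Ω] = lam • ![1, Ω])
    (q : ℤ) (hq : PrimitiveInt Ω (Umat Ω m) q) :
    (∃ C : ℝ, 0 < C ∧ ∀ n : ℕ,
      |gammaK Ω (sres Ω (Umat Ω m) q n) - gammaStarQ Ω m q| ≤ C * (lam ^ (2 * n))⁻¹) ∧
    Filter.Tendsto (fun n : ℕ => gammaK Ω (sres Ω (Umat Ω m) q n)) Filter.atTop
      (nhds (gammaStarQ Ω m q)) := by

  classical
  have hΩ : Ω ≠ 0 := ne_of_gt h0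
  have hlam0 : (0:ℝ) < lam := lt_trans one_pos hlam
  have hlamne : lam ≠ 0 := ne_of_gt hlam0
  set T := cfMatProd Ω m with hTdef
  set a : ℝ := ((T 0 0 : ℤ) : ℝ) with ha
  set b : ℝ := ((T 0 1 : ℤ) : ℝ) with hbdef
  set c : ℝ := ((T 1 0 : ℤ) : ℝ) with hc
  set d : ℝ := ((T 1 1 : ℤ) : ℝ) with hd
  set s : ℝ := (-1:ℝ)^m with hsdef
  have hsabs : |s| = 1 := by
    rw [hsdef, abs_pow, abs_neg, abs_one, one_pow]
  have hss : s * s = 1 := by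
    rw [hsdef, ← pow_add]; exact Even.neg_one_pow ⟨m, rfl⟩
  have e1 : a + b * Ω = lam := by
    have h := congrFun heig 0
    simp [Matrix.mulVec, dotProduct, Fin.sum_univ_two, Matrix.map_apply] at h
    simpa [ha, hbdef] using h
  have e2 : c + d * Ω = lam * Ω := by
    have h := congrFun heig 1
    simp [Matrix.mulVec, dotProduct, Fin.sum_univ_two, Matrix.map_apply] at h
    simpa [hc, hd] using h
  have edet : a * d - b * c = s := by
    have h := det_cfMatProd Ω m
    rw [Matrix.det_fin_two] at h
    have h2 : ((T 0 0 * T 1 1 - T 0 1 * T 1 0 : ℤ) : ℝ) = (((-1:ℤ)^m : ℤ) : ℝ) := by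
      exact_mod_cast congrArg (fun z : ℤ => (z : ℝ)) h
    push_cast at h2
    rw [ha, hbdef, hc, hd, hsdef]
    linarith [h2]
  have hb : b ≠ 0 := by
    intro hb0
    have hb' : T 0 1 = 0 := by
      have h2 : ((T 0 1 : ℤ) : ℝ) = 0 := hbdef ▸ hb0
      exact_mod_cast h2
    have hdvd : T 0 0 ∣ (-1:ℤ)^m := by
      refine ⟨T 1 1, ?_⟩
      have h := det_cfMatProd Ω m
      rw [← hTdef, Matrix.det_fin_two, hb'] at h
      linarith [h]
    have hu : IsUnit (T 0 0) := isUnit_of_dvd_unit hdvd ((isUnit_one.neg).pow m)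
    have halam : a = lam := by rw [← e1, hb0]; ring
    rcases Int.isUnit_iff.mp hu with h | h <;> rw [ha, h] at halam <;>
      simp at halam <;> linarith
  have hchar : lam * lam = lam * (a + d) - s := by
    linear_combination (d - lam) * e1 - b * e2 - edet
  obtain ⟨Ωb, hΩbdef⟩ : ∃ x : ℝ, x = -c / (b * Ω) := ⟨_, rfl⟩
  obtain ⟨μ, hμdef⟩ : ∃ x : ℝ, x = s / lam := ⟨_, rfl⟩
  have hbΩ : b * Ω ≠ 0 := mul_ne_zero hb hΩ
  have key1 : (a * Ω - c) * lam = s * Ω := by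
    linear_combination (-lam) * e2 + (-Ω) * hchar
  have key2pre : b * Ω * lam - d * lam + s = 0 := by
    linear_combination lam * e1 + hchar
  have k1 : a + b * Ωb = μ := by
    rw [hΩbdef, hμdef]
    field_simp
    linear_combination key1
  have k2 : c + d * Ωb = μ * Ωb := by
    rw [hΩbdef, hμdef]
    field_simp
    linear_combination c * key2pre
  have hΩΩb : Ω - Ωb ≠ 0 := by
    intro h
    have hΩeq : Ωb = Ω := by linarith
    rw [hΩeq] at k1
    rw [e1, hμdef] at k1
    have : lam * lam = s := by field_simp at k1; linarith [k1]
    have hs1 : s ≤ 1 := by nlinarith [hss]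
    nlinarith [this, hlam]
  obtain ⟨p, hpdef⟩ : ∃ x : ℝ, x = ((p0 Ω q : ℤ) : ℝ) := ⟨_, rfl⟩
  obtain ⟨α, hαdef⟩ : ∃ x : ℝ, x = ((q : ℝ) * Ωb - p) / (Ω - Ωb) := ⟨_, rfl⟩
  obtain ⟨β, hβdef⟩ : ∃ x : ℝ, x = -(q : ℝ) - α := ⟨_, rfl⟩
  have hα' : α * (Ω - Ωb) = (q : ℝ) * Ωb - p := by
    rw [hαdef]; exact div_mul_cancel₀ _ hΩΩb
  have base0 : α * Ω + β * Ωb = -p := by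
    rw [hβdef]; linear_combination hα' 
  have base1 : -α - β = (q : ℝ) := by rw [hβdef]; ring
  have hU : Umat Ω m = !![T 1 1, -(T 1 0); -(T 0 1), T 0 0] := Umat_eq Ω m
  have key : ∀ n : ℕ,
      ((((Umat Ω m ^ n).mulVec (kzero Ω q)) 0 : ℤ) : ℝ) = α * lam ^ n * Ω + β * μ ^ n * Ωb ∧
      ((((Umat Ω m ^ n).mulVec (kzero Ω q)) 1 : ℤ) : ℝ) = -(α * lam ^ n) - β * μ ^ n := by
    intro n
    induction n with
    | zero =>
      constructor
      · simp only [pow_zero, Matrix.one_mulVec, kzero]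
        show ((-(p0 Ω q) : ℤ) : ℝ) = _
        push_cast
        rw [← hpdef]
        linear_combination -base0
      · simp only [pow_zero, Matrix.one_mulVec, kzero]
        show ((q : ℤ) : ℝ) = _
        push_cast
        linear_combination -base1
    | succ n ih =>
      obtain ⟨ih0, ih1⟩ := ih
      have hpow : (Umat Ω m) ^ (n+1) = Umat Ω m * (Umat Ω m) ^ n := pow_succ' _ _
      have hv0 : ((Umat Ω m ^ (n+1)).mulVec (kzero Ω q)) 0
          = T 1 1 * ((Umat Ω m ^ n).mulVec (kzero Ω q)) 0
            + (-(T 1 0)) * ((Umat Ω m ^ n).mulVec (kzero Ω q)) 1 := by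
        rw [hpow, ← Matrix.mulVec_mulVec, hU]
        simp [Matrix.mulVec, dotProduct, Fin.sum_univ_two]
      have hv1 : ((Umat Ω m ^ (n+1)).mulVec (kzero Ω q)) 1
          = (-(T 0 1)) * ((Umat Ω m ^ n).mulVec (kzero Ω q)) 0
            + T 0 0 * ((Umat Ω m ^ n).mulVec (kzero Ω q)) 1 := by
        rw [hpow, ← Matrix.mulVec_mulVec, hU]
        simp [Matrix.mulVec, dotProduct, Fin.sum_univ_two]
      constructor
      · rw [hv0]
        push_cast
        rw [← hd, ← hc, ih0, ih1]
        linear_combination (α * lam ^ n) * e2 + (β * μ ^ n) * k2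
      · rw [hv1]
        push_cast
        rw [← ha, ← hbdef, ih0, ih1]
        linear_combination (-(α * lam ^ n)) * e1 + (-(β * μ ^ n)) * k1
  have habsμ : |μ| = lam⁻¹ := by
    rw [hμdef, abs_div, hsabs, abs_of_pos hlam0, one_div]
  have hrq : (q : ℝ) * Ω - p = β * (Ωb - Ω) := by
    linear_combination (-Ω) * base1 - base0
  have h5 : (Ω - Ωb) * (b * Ω) = c + b * Ω ^ 2 := by
    rw [hΩbdef]; field_simp; ring
  have h6 : Ωb * (b * Ω) = -c := by
    rw [hΩbdef]; field_simp
  have hαeq : α * (c + b * Ω ^ 2) = -(c * (q : ℝ) + b * p * Ω) := by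
    linear_combination (b * Ω) * hα' - α * h5 + (q : ℝ) * h6
  have hden : c + b * Ω ^ 2 ≠ 0 := by
    rw [← h5]; exact mul_ne_zero hΩΩb hbΩ
  have hKq : KqD Ω m q = |α| * (1 + Ω) := by
    rw [KqD, ← hTdef, ← hc, ← hbdef, ← hpdef]
    have h7 : |c * (q : ℝ) + b * p * Ω| = |α| * |c + b * Ω ^ 2| := by
      rw [← abs_neg, ← hαeq, abs_mul]
    rw [h7]
    field_simp [abs_ne_zero.mpr hden]
  have hγstar : gammaStarQ Ω m q = |β * (Ωb - Ω)| * (|α| * (1 + Ω)) := by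
    rw [gammaStarQ, hKq]
    congr 1
    rw [← hrq, hpdef]
  have hγeq : ∀ n : ℕ, gammaK Ω (sres Ω (Umat Ω m) q n)
      = (lam ^ n)⁻¹ * |β * (Ωb - Ω)|
        * (|α * lam ^ n * Ω + β * μ ^ n * Ωb| + |-(α * lam ^ n) - β * μ ^ n|) := by
    intro n
    obtain ⟨key0, key1'⟩ := key n
    have hpair : pairω Ω ((Umat Ω m ^ n).mulVec (kzero Ω q)) = μ ^ n * (β * (Ωb - Ω)) := by
      rw [pairω, key0, key1']; ring
    have hn1 : ((norm1 ((Umat Ω m ^ n).mulVec (kzero Ω q)) : ℤ) : ℝ)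
        = |α * lam ^ n * Ω + β * μ ^ n * Ωb| + |-(α * lam ^ n) - β * μ ^ n| := by
      rw [norm1]
      push_cast
      rw [key0, key1']
    show |pairω Ω ((Umat Ω m ^ n).mulVec (kzero Ω q))|
        * ((norm1 ((Umat Ω m ^ n).mulVec (kzero Ω q)) : ℤ) : ℝ) = _
    rw [hpair, hn1, abs_mul, abs_pow, habsμ, inv_pow]
  obtain ⟨R, hRdef⟩ : ∃ x : ℝ, x = |β * (Ωb - Ω)| := ⟨_, rfl⟩
  have hR0 : 0 ≤ R := hRdef ▸ abs_nonneg _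
  obtain ⟨C0, hC0def⟩ : ∃ x : ℝ, x = R * (|β| * (|Ωb| + 1)) := ⟨_, rfl⟩
  have hC00 : 0 ≤ C0 := by
    rw [hC0def]
    positivity
  have hbnd : ∀ n : ℕ, |gammaK Ω (sres Ω (Umat Ω m) q n) - gammaStarQ Ω m q|
      ≤ C0 * (lam ^ (2 * n))⁻¹ := by
    intro n
    have hLpos : (0 : ℝ) < lam ^ n := pow_pos hlam0 n
    have hLinv : (0 : ℝ) < (lam ^ n)⁻¹ := inv_pos.mpr hLpos
    have h2n : (lam ^ (2 * n))⁻¹ = (lam ^ n)⁻¹ * (lam ^ n)⁻¹ := by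
      rw [two_mul, pow_add, mul_inv]
    have habsμn : |μ| ^ n = (lam ^ n)⁻¹ := by rw [habsμ, inv_pow]
    have hA1 : abs (|α * lam ^ n * Ω + β * μ ^ n * Ωb| - |α| * lam ^ n * Ω)
        ≤ (lam ^ n)⁻¹ * (|β| * |Ωb|) := by
      have h7 : |α * lam ^ n * Ω| = |α| * lam ^ n * Ω := by
        rw [abs_mul, abs_mul, abs_of_pos hLpos, abs_of_pos h0]
      calc abs (|α * lam ^ n * Ω + β * μ ^ n * Ωb| - |α| * lam ^ n * Ω)
          = abs (|α * lam ^ n * Ω + β * μ ^ n * Ωb| - |α * lam ^ n * Ω|) := by rw [h7]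
        _ ≤ |(α * lam ^ n * Ω + β * μ ^ n * Ωb) - α * lam ^ n * Ω| :=
            abs_abs_sub_abs_le_abs_sub _ _
        _ = |β * μ ^ n * Ωb| := by ring_nf
        _ = (lam ^ n)⁻¹ * (|β| * |Ωb|) := by
            rw [abs_mul, abs_mul, abs_pow, habsμn]; ring
    have hA2 : abs (|-(α * lam ^ n) - β * μ ^ n| - |α| * lam ^ n)
        ≤ (lam ^ n)⁻¹ * |β| := by
      have h7 : |-(α * lam ^ n)| = |α| * lam ^ n := by
        rw [abs_neg, abs_mul, abs_of_pos hLpos]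
      calc abs (|-(α * lam ^ n) - β * μ ^ n| - |α| * lam ^ n)
          = abs (|-(α * lam ^ n) - β * μ ^ n| - |-(α * lam ^ n)|) := by rw [h7]
        _ ≤ |(-(α * lam ^ n) - β * μ ^ n) - -(α * lam ^ n)| :=
            abs_abs_sub_abs_le_abs_sub _ _
        _ = |(-(β * μ ^ n))| := by ring_nf
        _ = (lam ^ n)⁻¹ * |β| := by rw [abs_neg, abs_mul, abs_pow, habsμn]; ring
    have hS : abs ((|α * lam ^ n * Ω + β * μ ^ n * Ωb| + |-(α * lam ^ n) - β * μ ^ n|)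
        - |α| * lam ^ n * (1 + Ω))
        ≤ (lam ^ n)⁻¹ * (|β| * (|Ωb| + 1)) := by
      have h8 := abs_add_le (|α * lam ^ n * Ω + β * μ ^ n * Ωb| - |α| * lam ^ n * Ω)
        (|-(α * lam ^ n) - β * μ ^ n| - |α| * lam ^ n)
      have h9 : (|α * lam ^ n * Ω + β * μ ^ n * Ωb| - |α| * lam ^ n * Ω)
          + (|-(α * lam ^ n) - β * μ ^ n| - |α| * lam ^ n)
          = (|α * lam ^ n * Ω + β * μ ^ n * Ωb| + |-(α * lam ^ n) - β * μ ^ n|)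
            - |α| * lam ^ n * (1 + Ω) := by ring
      rw [h9] at h8
      calc _ ≤ _ := h8
        _ ≤ (lam ^ n)⁻¹ * (|β| * |Ωb|) + (lam ^ n)⁻¹ * |β| := add_le_add hA1 hA2
        _ = (lam ^ n)⁻¹ * (|β| * (|Ωb| + 1)) := by ring
    rw [hγeq n, hγstar, ← hRdef]
    have h10 : (lam ^ n)⁻¹ * R
          * (|α * lam ^ n * Ω + β * μ ^ n * Ωb| + |-(α * lam ^ n) - β * μ ^ n|)
        - R * (|α| * (1 + Ω))
        = ((lam ^ n)⁻¹ * R)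
          * ((|α * lam ^ n * Ω + β * μ ^ n * Ωb| + |-(α * lam ^ n) - β * μ ^ n|)
            - |α| * lam ^ n * (1 + Ω)) := by
      field_simp
    rw [h10, abs_mul, abs_of_nonneg (by positivity : (0:ℝ) ≤ (lam ^ n)⁻¹ * R)]
    calc (lam ^ n)⁻¹ * R * abs ((|α * lam ^ n * Ω + β * μ ^ n * Ωb| + |-(α * lam ^ n) - β * μ ^ n|)
            - |α| * lam ^ n * (1 + Ω))
          ≤ (lam ^ n)⁻¹ * R * ((lam ^ n)⁻¹ * (|β| * (|Ωb| + 1))) := by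
          exact mul_le_mul_of_nonneg_left hS (by positivity)
      _ = C0 * (lam ^ (2 * n))⁻¹ := by rw [hC0def, h2n]; ring
  refine ⟨⟨C0 + 1, by linarith, fun n => ?_⟩, ?_⟩
  · exact (hbnd n).trans (mul_le_mul_of_nonneg_right (by linarith)
      (by positivity))
  · have h13 : Filter.Tendsto (fun n : ℕ => C0 * (lam ^ (2 * n))⁻¹) Filter.atTop (nhds 0) := by
      have h14 : Filter.Tendsto (fun n : ℕ => lam ^ (2 * n)) Filter.atTop Filter.atTop := by
        simp_rw [pow_mul]
        exact tendsto_pow_atTop_atTop_of_one_lt (by nlinarith)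
      have h15 := (Filter.Tendsto.inv_tendsto_atTop h14).const_mul C0
      simpa using h15
    have h16 : Filter.Tendsto
        (fun n : ℕ => gammaK Ω (sres Ω (Umat Ω m) q n) - gammaStarQ Ω m q)
        Filter.atTop (nhds 0) := by
      apply squeeze_zero_norm (fun n => ?_) h13
      simpa [Real.norm_eq_abs] using hbnd n
    have h17 := h16.add_const (gammaStarQ Ω m q)
    simpa using h17
end

section
/- Let Ω ∈ (0,1) be a quadratic irrational with purely periodic continued fraction, associated matrix T = [[a,b],[c,d]] and eigenvalue λ > 1. Then for every primitive integer q, the limit numerator satisfies the lower bound γ*_q > ((1+Ω)q − α)/(2λ), where α = |b|Ω(1+Ω)/(2|c+bΩ²|). -/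
open Real Filter Matrix

section CF
variable {Ω : ℝ}

lemma orbit_props (hirr : Irrational Ω) (h0 : 0 < Ω) (h1 : Ω < 1) :
    ∀ j, Irrational (gaussOrbit Ω j) ∧ 0 < gaussOrbit Ω j ∧ gaussOrbit Ω j < 1 := by
  intro j
  induction j with
  | zero => exact ⟨hirr, h0, h1⟩
  | succ j ih =>
    obtain ⟨hi, hp, hl⟩ := ih
    have hinv : Irrational (1 / gaussOrbit Ω j) := by
      rw [one_div]; exact hi.inv
    have h2 : Irrational (gaussOrbit Ω (j+1)) := by
      show Irrational (Int.fract (1 / gaussOrbit Ω j))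
      unfold Int.fract
      exact hinv.sub_intCast _
    refine ⟨h2, ?_, ?_⟩
    · show 0 < Int.fract (1 / gaussOrbit Ω j)
      rw [Int.fract_pos]
      intro h
      exact (hinv.ne_int _) h
    · exact Int.fract_lt_one _

lemma cfA_pos (hirr : Irrational Ω) (h0 : 0 < Ω) (h1 : Ω < 1) (j : ℕ) : 1 ≤ cfA Ω j := by
  obtain ⟨hi, hp, hl⟩ := orbit_props hirr h0 h1 j
  rw [cfA, Int.le_floor]
  push_cast
  rw [le_div_iff₀ hp]
  linarith

lemma orbit_inv (hirr : Irrational Ω) (h0 : 0 < Ω) (h1 : Ω < 1) (j : ℕ) :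
    gaussOrbit Ω j * ((cfA Ω j : ℝ) + gaussOrbit Ω (j+1)) = 1 := by
  obtain ⟨hi, hp, hl⟩ := orbit_props hirr h0 h1 j
  have : gaussOrbit Ω (j+1) = Int.fract (1 / gaussOrbit Ω j) := rfl
  rw [this, Int.fract, cfA]
  field_simp
  ring

lemma cfQ_facts (hirr : Irrational Ω) (h0 : 0 < Ω) (h1 : Ω < 1) :
    ∀ j, 0 ≤ cfQ Ω j ∧ cfQ Ω j ≤ cfQ Ω (j+1) ∧ 1 ≤ cfQ Ω (j+1) := by
  intro j
  induction j with
  | zero => refine ⟨le_refl 0, ?_, ?_⟩ <;> simp [cfQ]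
  | succ j ih =>
    obtain ⟨h1', h2', h3'⟩ := ih
    have ha := cfA_pos hirr h0 h1 j
    have heq : cfQ Ω (j+2) = cfA Ω j * cfQ Ω (j+1) + cfQ Ω j := rfl
    refine ⟨by linarith, ?_, ?_⟩ <;> rw [heq] <;> nlinarith

lemma cfP_nonneg (hirr : Irrational Ω) (h0 : 0 < Ω) (h1 : Ω < 1) :
    ∀ j, 0 ≤ cfP Ω j ∧ 0 ≤ cfP Ω (j+1) := by
  intro j
  induction j with
  | zero => simp [cfP]
  | succ j ih =>
    have ha := cfA_pos hirr h0 h1 j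
    refine ⟨ih.2, ?_⟩
    rw [show cfP Ω (j+2) = cfA Ω j * cfP Ω (j+1) + cfP Ω j from rfl]
    nlinarith [ih.1, ih.2]

lemma cfP_facts (hirr : Irrational Ω) (h0 : 0 < Ω) (h1 : Ω < 1) :
    ∀ j, 0 ≤ cfP Ω j ∧ cfP Ω (j+1) ≤ cfP Ω (j+2) ∧ 1 ≤ cfP Ω (j+2) := by
  intro j
  induction j with
  | zero =>
    rw [show cfP Ω 2 = cfA Ω 0 * cfP Ω 1 + cfP Ω 0 from rfl]
    simp [cfP]
  | succ j ih =>
    obtain ⟨h1', h2', h3'⟩ := ih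
    have ha := cfA_pos hirr h0 h1 (j+1)
    have heq : cfP Ω (j+3) = cfA Ω (j+1) * cfP Ω (j+2) + cfP Ω (j+1) := rfl
    have h0' : 0 ≤ cfP Ω (j+1) := (cfP_nonneg hirr h0 h1 j).2
    refine ⟨(cfP_nonneg hirr h0 h1 j).2, ?_, ?_⟩ <;> rw [heq] <;> nlinarith

lemma cfQ_mono (hirr : Irrational Ω) (h0 : 0 < Ω) (h1 : Ω < 1) : Monotone (cfQ Ω) :=
  monotone_nat_of_le_succ fun j => (cfQ_facts hirr h0 h1 j).2.1

lemma cf_identity (hirr : Irrational Ω) (h0 : 0 < Ω) (h1 : Ω < 1) :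
    ∀ j, (cfP Ω (j+1) : ℝ) + (cfP Ω j : ℝ) * gaussOrbit Ω j
      = Ω * ((cfQ Ω (j+1) : ℝ) + (cfQ Ω j : ℝ) * gaussOrbit Ω j) := by
  intro j
  induction j with
  | zero => simp [cfP, cfQ, gaussOrbit]
  | succ j ih =>
    have hinv := orbit_inv hirr h0 h1 j
    obtain ⟨hi, hp, hl⟩ := orbit_props hirr h0 h1 j
    have hne : gaussOrbit Ω j ≠ 0 := ne_of_gt hp
    rw [show cfP Ω (j+2) = cfA Ω j * cfP Ω (j+1) + cfP Ω j from rfl,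
        show cfQ Ω (j+2) = cfA Ω j * cfQ Ω (j+1) + cfQ Ω j from rfl]
    push_cast
    linear_combination ((cfA Ω j : ℝ) + gaussOrbit Ω (j+1)) * ih + (Ω * (cfQ Ω j : ℝ) - (cfP Ω j : ℝ)) * hinv

lemma cf_det : ∀ j, cfP Ω (j+1) * cfQ Ω j - cfQ Ω (j+1) * cfP Ω j = (-1)^(j+1) := by
  intro j
  induction j with
  | zero => simp [cfP, cfQ]
  | succ j ih =>
    rw [show cfP Ω (j+2) = cfA Ω j * cfP Ω (j+1) + cfP Ω j from rfl,
        show cfQ Ω (j+2) = cfA Ω j * cfQ Ω (j+1) + cfQ Ω j from rfl]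
    ring_nf
    ring_nf at ih
    linarith

end CF

/-- `(Q_j Ω - P_j) * (Q_{j+1} + Q_j t_{j+1}) = (-1)^j`  (file indices shifted by 1). -/
lemma cf_err (hirr : Irrational Ω) (h0 : 0 < Ω) (h1 : Ω < 1) (j : ℕ) :
    ((cfQ Ω (j+1) : ℝ) * Ω - (cfP Ω (j+1) : ℝ)) *
      ((cfQ Ω (j+2) : ℝ) + (cfQ Ω (j+1) : ℝ) * gaussOrbit Ω (j+1)) = (-1)^j := by
  have h5 := cf_identity hirr h0 h1 (j+1)
  have h6' := cf_det (Ω := Ω) (j+1)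
  have h6 : ((cfP Ω (j+2)) : ℝ) * ((cfQ Ω (j+1)) : ℝ) - ((cfQ Ω (j+2)) : ℝ) * ((cfP Ω (j+1)) : ℝ)
      = (-1 : ℝ)^(j+2) := by exact_mod_cast h6'
  linear_combination (-(cfQ Ω (j+1) : ℝ)) * h5 + h6

lemma denom_pos (hirr : Irrational Ω) (h0 : 0 < Ω) (h1 : Ω < 1) (j : ℕ) :
    0 < (cfQ Ω (j+2) : ℝ) + (cfQ Ω (j+1) : ℝ) * gaussOrbit Ω (j+1) := by
  have hq1 := (cfQ_facts hirr h0 h1 (j+1)).2.2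
  have hq0 := (cfQ_facts hirr h0 h1 j).2.2
  have ht := (orbit_props hirr h0 h1 (j+1)).2.1
  have : (1 : ℝ) ≤ (cfQ Ω (j+2) : ℝ) := by exact_mod_cast hq1
  have : (1 : ℝ) ≤ (cfQ Ω (j+1) : ℝ) := by exact_mod_cast hq0
  nlinarith

/-- |ε_j| > 1/(Q_{j+1} + Q_j) -/
lemma cf_err_lb (hirr : Irrational Ω) (h0 : 0 < Ω) (h1 : Ω < 1) (j : ℕ) :
    1 / ((cfQ Ω (j+2) : ℝ) + (cfQ Ω (j+1) : ℝ))
      < |(cfQ Ω (j+1) : ℝ) * Ω - (cfP Ω (j+1) : ℝ)| := by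
  have herr := cf_err hirr h0 h1 j
  have hd := denom_pos hirr h0 h1 j
  have habs : |(cfQ Ω (j+1) : ℝ) * Ω - (cfP Ω (j+1) : ℝ)|
      * ((cfQ Ω (j+2) : ℝ) + (cfQ Ω (j+1) : ℝ) * gaussOrbit Ω (j+1)) = 1 := by
    rw [← abs_of_pos hd, ← abs_mul, herr]
    simp [abs_pow]
  have hq1 := (cfQ_facts hirr h0 h1 (j+1)).2.2
  have hq0 := (cfQ_facts hirr h0 h1 j).2.2
  have hQ2 : (1 : ℝ) ≤ (cfQ Ω (j+2) : ℝ) := by exact_mod_cast hq1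
  have hQ1 : (1 : ℝ) ≤ (cfQ Ω (j+1) : ℝ) := by exact_mod_cast hq0
  have ht := (orbit_props hirr h0 h1 (j+1)).2
  have hlt : (cfQ Ω (j+2) : ℝ) + (cfQ Ω (j+1) : ℝ) * gaussOrbit Ω (j+1)
      < (cfQ Ω (j+2) : ℝ) + (cfQ Ω (j+1) : ℝ) := by nlinarith [ht.1, ht.2]
  rw [div_lt_iff₀ (by linarith)]
  nlinarith [abs_nonneg ((cfQ Ω (j+1) : ℝ) * Ω - (cfP Ω (j+1) : ℝ))]

/-- sign of ε_j is (-1)^j : ε_j * ε_{j+1} < 0 -/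
lemma cf_err_sign (hirr : Irrational Ω) (h0 : 0 < Ω) (h1 : Ω < 1) (j : ℕ) :
    ((cfQ Ω (j+1) : ℝ) * Ω - (cfP Ω (j+1) : ℝ)) *
      ((cfQ Ω (j+2) : ℝ) * Ω - (cfP Ω (j+2) : ℝ)) < 0 := by
  have e1 := cf_err hirr h0 h1 j
  have e2 := cf_err hirr h0 h1 (j+1)
  have d1 := denom_pos hirr h0 h1 j
  have d2 := denom_pos hirr h0 h1 (j+1)
  have h1' : ((cfQ Ω (j+1) : ℝ) * Ω - (cfP Ω (j+1) : ℝ)) *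
      ((cfQ Ω (j+2) : ℝ) * Ω - (cfP Ω (j+2) : ℝ)) *
      (((cfQ Ω (j+2) : ℝ) + (cfQ Ω (j+1) : ℝ) * gaussOrbit Ω (j+1)) *
       ((cfQ Ω (j+3) : ℝ) + (cfQ Ω (j+2) : ℝ) * gaussOrbit Ω (j+2))) = (-1)^j * (-1)^(j+1) := by
    rw [show ((cfQ Ω (j+1) : ℝ) * Ω - (cfP Ω (j+1) : ℝ)) *
      ((cfQ Ω (j+2) : ℝ) * Ω - (cfP Ω (j+2) : ℝ)) *
      (((cfQ Ω (j+2) : ℝ) + (cfQ Ω (j+1) : ℝ) * gaussOrbit Ω (j+1)) *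
       ((cfQ Ω (j+3) : ℝ) + (cfQ Ω (j+2) : ℝ) * gaussOrbit Ω (j+2)))
      = (((cfQ Ω (j+1) : ℝ) * Ω - (cfP Ω (j+1) : ℝ)) *
      ((cfQ Ω (j+2) : ℝ) + (cfQ Ω (j+1) : ℝ) * gaussOrbit Ω (j+1))) *
      ((((cfQ Ω (j+2) : ℝ) * Ω - (cfP Ω (j+2) : ℝ))) *
       ((cfQ Ω (j+3) : ℝ) + (cfQ Ω (j+2) : ℝ) * gaussOrbit Ω (j+2))) from by ring, e1, e2]
  have hneg : ((-1 : ℝ))^j * (-1)^(j+1) = -1 := by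
    rw [pow_succ]; rcases Nat.even_or_odd j with h | h
    · rw [h.neg_one_pow]; ring
    · rw [h.neg_one_pow]; ring
  rw [hneg] at h1'
  nlinarith [mul_pos d1 d2]

lemma abs_le_abs_add_of_sign (u v : ℝ) (h : 0 ≤ u * v) : |u| ≤ |u + v| := by
  rcases le_or_gt 0 u with hu | hu
  · rcases le_or_gt 0 v with hv | hv
    · rw [abs_of_nonneg hu, abs_of_nonneg (by linarith)]; linarith
    · have hu0 : u = 0 := by nlinarith
      simp [hu0]
  · have hv : v ≤ 0 := by nlinarith
    rw [abs_of_neg hu, abs_of_nonpos (by linarith)]; linarith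

/-- Best approximation: for `1 ≤ q < Q_{j+1}` (file `cfQ (j+2)`),
`|ε_j| ≤ |qΩ - p|`. -/
lemma best_approx (hirr : Irrational Ω) (h0 : 0 < Ω) (h1 : Ω < 1) (j : ℕ) (q p : ℤ)
    (hq1 : 1 ≤ q) (hq2 : q < cfQ Ω (j+2)) :
    |(cfQ Ω (j+1) : ℝ) * Ω - (cfP Ω (j+1) : ℝ)| ≤ |(q : ℝ) * Ω - (p : ℝ)| := by
  set x : ℤ := (-1)^j * (cfP Ω (j+2) * q - cfQ Ω (j+2) * p) with hx
  set y : ℤ := (-1)^j * (cfQ Ω (j+1) * p - cfP Ω (j+1) * q) with hy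
  have hdet := cf_det (Ω := Ω) (j+1)
  have hsq : ((-1 : ℤ)^j) * ((-1 : ℤ)^(j+2)) = 1 := by
    rw [← pow_add]
    rw [show j + (j+2) = 2*(j+1) by ring, pow_mul]
    norm_num
  have hqeq : q = x * cfQ Ω (j+1) + y * cfQ Ω (j+2) := by
    rw [hx, hy]
    linear_combination (-q * ((-1:ℤ)^j)) * hdet - q * hsq
  have hpeq : p = x * cfP Ω (j+1) + y * cfP Ω (j+2) := by
    rw [hx, hy]
    linear_combination (-p * ((-1:ℤ)^j)) * hdet - p * hsq
  set e1 : ℝ := (cfQ Ω (j+1) : ℝ) * Ω - (cfP Ω (j+1) : ℝ) with he1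
  set e2 : ℝ := (cfQ Ω (j+2) : ℝ) * Ω - (cfP Ω (j+2) : ℝ) with he2
  have hkey : (q : ℝ) * Ω - (p : ℝ) = (x : ℝ) * e1 + (y : ℝ) * e2 := by
    rw [he1, he2]
    have hq' : (q : ℝ) = (x:ℝ) * (cfQ Ω (j+1):ℝ) + (y:ℝ) * (cfQ Ω (j+2):ℝ) := by
      exact_mod_cast hqeq
    have hp' : (p : ℝ) = (x:ℝ) * (cfP Ω (j+1):ℝ) + (y:ℝ) * (cfP Ω (j+2):ℝ) := by
      exact_mod_cast hpeq
    rw [hq', hp']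
    ring
  have hQ1 : 1 ≤ cfQ Ω (j+1) := (cfQ_facts hirr h0 h1 j).2.2
  have hQ2 : 1 ≤ cfQ Ω (j+2) := (cfQ_facts hirr h0 h1 (j+1)).2.2
  rcases eq_or_ne y 0 with hy0 | hy0
  · -- q = x Q_{j+1}, x ≥ 1
    have hx1 : 1 ≤ x := by
      rcases le_or_gt 1 x with h | h
      · exact h
      · exfalso; rw [hy0] at hqeq; nlinarith
    rw [hkey, hy0]
    push_cast
    rw [zero_mul, add_zero, abs_mul]
    have : (1 : ℝ) ≤ |(x : ℝ)| := by
      rw [abs_of_pos (by exact_mod_cast hx1 : (0:ℝ) < (x:ℝ))]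
      exact_mod_cast hx1
    nlinarith [abs_nonneg e1]
  · rcases eq_or_ne x 0 with hx0 | hx0
    · exfalso
      rw [hx0] at hqeq
      simp at hqeq
      rcases le_or_gt 1 y with h | h
      · nlinarith
      · have : y ≤ 0 := by omega
        nlinarith
    · -- x, y both nonzero: opposite signs
      have hxy : x * y < 0 := by
        rcases lt_or_gt_of_ne hx0 with hx' | hx' <;> rcases lt_or_gt_of_ne hy0 with hy' | hy'
        · exfalso; nlinarith
        · nlinarith
        · nlinarith
        · exfalso; nlinarith
      have hsign := cf_err_sign hirr h0 h1 j
      have : 0 ≤ ((x : ℝ) * e1) * ((y : ℝ) * e2) := by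
        have hxyR : ((x : ℝ) * (y : ℝ)) < 0 := by exact_mod_cast hxy
        rw [he1, he2] at *
        nlinarith
      rw [hkey]
      calc |e1| ≤ |(x:ℝ)| * |e1| := by
            have hx1 : (1:ℝ) ≤ |(x:ℝ)| := by
              have : (1 : ℤ) ≤ |x| := Int.one_le_abs (by simpa using hx0)
              exact_mod_cast this
            nlinarith [abs_nonneg e1]
        _ = |(x:ℝ) * e1| := (abs_mul _ _).symm
        _ ≤ |(x:ℝ) * e1 + (y:ℝ) * e2| := abs_le_abs_add_of_sign _ _ this

lemma find_j (hirr : Irrational Ω) (h0 : 0 < Ω) (h1 : Ω < 1) (m : ℕ) (q : ℤ)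
    (hq1 : 1 ≤ q) (hq2 : q < cfQ Ω m) :
    ∃ j, j + 2 ≤ m ∧ cfQ Ω (j+1) ≤ q ∧ q < cfQ Ω (j+2) := by
  have hm2 : 2 ≤ m := by
    by_contra h
    interval_cases m
    · simp [cfQ] at hq2; omega
    · simp [cfQ] at hq2; omega
  have hex : ∃ i, q < cfQ Ω (i+2) := ⟨m - 2, by rwa [show m - 2 + 2 = m by omega]⟩
  classical
  let j := Nat.find hex
  refine ⟨j, ?_, ?_, Nat.find_spec hex⟩
  · have : j ≤ m - 2 := Nat.find_le (by rwa [show m - 2 + 2 = m by omega])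
    omega
  · rcases Nat.eq_zero_or_pos j with hj0 | hjp
    · rw [hj0]
      rw [show cfQ Ω 1 = 1 from rfl]
      exact hq1
    · have := Nat.find_min hex (show j - 1 < j by omega)
      rw [show j - 1 + 2 = j + 1 by omega] at this
      omega

lemma cfMatProd_eq (n : ℕ) :
    cfMatProd Ω n = !![cfQ Ω (n+1), cfQ Ω n; cfP Ω (n+1), cfP Ω n] := by
  induction n with
  | zero =>
    rw [cfMatProd]
    simp [cfQ, cfP]
    ext i j
    fin_cases i <;> fin_cases j <;> simp [cfQ, cfP]
  | succ n ih =>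
    rw [cfMatProd, List.range_succ, List.map_append, List.prod_append]
    simp only [List.map_cons, List.map_nil, List.prod_cons, List.prod_nil, mul_one]
    rw [← cfMatProd, ih, Acf]
    rw [show cfQ Ω (n+2) = cfA Ω n * cfQ Ω (n+1) + cfQ Ω n from rfl,
        show cfP Ω (n+2) = cfA Ω n * cfP Ω (n+1) + cfP Ω n from rfl]
    ext i j
    fin_cases i <;> fin_cases j <;>
      simp [Matrix.mul_apply, Fin.sum_univ_two] <;> ring

lemma cfMatProd_det (n : ℕ) : (cfMatProd Ω n).det = (-1)^n := by
  rw [cfMatProd_eq, Matrix.det_fin_two_of]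
  have := cf_det (Ω := Ω) n
  have hp : ((-1:ℤ))^(n+1) = -(-1)^n := by rw [pow_succ]; ring
  rw [hp] at this
  linarith

lemma Umat_inv' (m : ℕ) :
    (((-1 : ℤ) ^ m) • ((cfMatProd Ω m)⁻¹)ᵀ)⁻¹ = ((-1 : ℤ) ^ m) • (cfMatProd Ω m)ᵀ := by
  have hdet : IsUnit (cfMatProd Ω m).det := by
    rw [cfMatProd_det]
    exact (isUnit_one.neg.pow m)
  have hTT : cfMatProd Ω m * (cfMatProd Ω m)⁻¹ = 1 := Matrix.mul_nonsing_inv _ hdet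
  apply Matrix.inv_eq_right_inv
  rw [Matrix.smul_mul, Matrix.mul_smul, smul_smul, ← Matrix.transpose_mul, hTT,
    Matrix.transpose_one]
  have hone : ((-1:ℤ)^m) * ((-1:ℤ)^m) = 1 := by
    rw [← pow_add, show m + m = 2*m from by ring, pow_mul]; norm_num
  rw [hone, one_smul]
lemma round_eq_of_abs_lt {x : ℝ} {n : ℤ} (h : |x - n| < 1/2) : round x = n := by
  rw [round_eq, Int.floor_eq_iff]
  rw [abs_lt] at h
  constructor <;> push_cast <;> linarith

lemma irr_ne_half {Ω : ℝ} (hirr : Irrational Ω) (u v : ℤ) : |(u:ℝ) + (v:ℝ)*Ω| ≠ 1/2 := by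
  intro h
  rcases (abs_eq (by norm_num : (0:ℝ) ≤ 1/2)).mp h with h' | h'
  · rcases eq_or_ne v 0 with hv | hv
    · rw [hv] at h'
      norm_num at h'
      have h2 : ((2*u : ℤ) : ℝ) = 1 := by push_cast; linarith
      have : (2*u : ℤ) = 1 := by exact_mod_cast h2
      omega
    · have h2 : ((v:ℝ))*Ω = ((1/2 - u : ℚ) : ℝ) := by push_cast; linarith
      exact Rat.not_irrational _ (h2 ▸ hirr.intCast_mul hv)
  · rcases eq_or_ne v 0 with hv | hv
    · rw [hv] at h'
      norm_num at h'
      have h2 : ((2*u : ℤ) : ℝ) = -1 := by push_cast; linarith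
      have : (2*u : ℤ) = -1 := by exact_mod_cast h2
      omega
    · have h2 : ((v:ℝ))*Ω = ((-(1/2) - u : ℚ) : ℝ) := by push_cast; linarith
      exact Rat.not_irrational _ (h2 ▸ hirr.intCast_mul hv)

lemma irr_lin_ne {Ω : ℝ} (hirr : Irrational Ω) (q p : ℤ) (hq : q ≠ 0) : (q:ℝ)*Ω - (p:ℝ) ≠ 0 := by
  intro h
  have : ((q:ℝ))*Ω = ((p : ℚ) : ℝ) := by push_cast; linarith
  exact Rat.not_irrational _ (this ▸ hirr.intCast_mul hq)

set_option maxHeartbeats 1000000 in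
/-- Key lower bound: for primitive (in the ¬inA sense) q, `1/(2λ) < |qΩ - p⁰(q)|`. -/
lemma key_lower (Ω : ℝ) (m : ℕ) (hm : 1 ≤ m) (h0 : 0 < Ω) (h1 : Ω < 1)
    (hirr : Irrational Ω)
    (lam : ℝ) (hlam : 1 < lam)
    (heig : ((cfMatProd Ω m).map fun z : ℤ => (z : ℝ)).mulVec ![1, Ω] = lam • ![1, Ω])
    (q : ℤ) (hq1 : 1 ≤ q)
    (hnotinA : ¬inA Ω ((Umat Ω m)⁻¹.mulVec (kzero Ω q))) :
    1/(2*lam) < |(q:ℝ) * Ω - (p0 Ω q : ℝ)| := by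
  have hitem : cfMatProd Ω m = !![cfQ Ω (m+1), cfQ Ω m; cfP Ω (m+1), cfP Ω m] :=
    cfMatProd_eq m
  set A : ℝ := (cfQ Ω (m+1) : ℝ) with hA
  set B : ℝ := (cfQ Ω m : ℝ) with hB
  set C : ℝ := (cfP Ω (m+1) : ℝ) with hC
  set D : ℝ := (cfP Ω m : ℝ) with hD
  set σ : ℝ := (-1 : ℝ)^m with hσ
  have hσ2 : σ * σ = 1 := by
    rw [hσ, ← pow_add, show m + m = 2*m from by ring, pow_mul]; norm_num
  have hσcases : σ = 1 ∨ σ = -1 := by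
    rcases Nat.even_or_odd m with h | h
    · left; rw [hσ, h.neg_one_pow]
    · right; rw [hσ, h.neg_one_pow]
  have habs_σ : ∀ x : ℝ, |σ * x| = |x| := by
    intro x; rcases hσcases with h | h <;> rw [h] <;> simp
  have h00 : A + B * Ω = lam := by
    have := congrFun heig 0
    rw [hitem] at this
    simpa [Matrix.mulVec, dotProduct, Fin.sum_univ_two, hA, hB] using this
  have h10 : C + D * Ω = lam * Ω := by
    have := congrFun heig 1
    rw [hitem] at this
    simpa [Matrix.mulVec, dotProduct, Fin.sum_univ_two, hC, hD] using this
  have hB1 : (1:ℝ) ≤ B := by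
    rw [hB]; exact_mod_cast (by simpa [Nat.sub_add_cancel hm] using
      (cfQ_facts hirr h0 h1 (m-1)).2.2 : 1 ≤ cfQ Ω m)
  have hA1 : B ≤ A := by
    rw [hA, hB]; exact_mod_cast (cfQ_facts hirr h0 h1 m).2.1
  have hlam0 : (0:ℝ) < lam := by linarith
  have hdetR : A * D - B * C = σ := by
    have hdz := cf_det (Ω := Ω) m
    have h' : C * B - A * D = (-1:ℝ)^(m+1) := by
      rw [hA, hB, hC, hD]; exact_mod_cast hdz
    have h'' : ((-1:ℝ))^(m+1) = -σ := by rw [hσ, pow_succ]; ring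
    rw [h''] at h'
    linarith
  have hmu : lam * (D - B * Ω) = σ := by
    linear_combination (-(D)) * h00 + B * h10 + hdetR
  set p : ℤ := p0 Ω q with hp
  set r : ℝ := (q:ℝ) * Ω - (p:ℝ) with hr
  set R : ℝ := |r| with hR
  have hqR : (1:ℝ) ≤ (q:ℝ) := by exact_mod_cast hq1
  have hrne : r ≠ 0 := irr_lin_ne hirr q p (by omega)
  have hRpos : 0 < R := abs_pos.mpr hrne
  have hBlam : B < lam := by nlinarith
  by_contra hcon
  push_neg at hcon
  have hlamR : lam * R ≤ 1/2 := by
    rw [le_div_iff₀ (by linarith : (0:ℝ) < 2*lam)] at hcon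
    nlinarith
  set k' : Fin 2 → ℤ := (Umat Ω m)⁻¹.mulVec (kzero Ω q) with hk'def
  have hk' : k' = ![(-1:ℤ)^m * (cfP Ω (m+1) * q - cfQ Ω (m+1) * p),
                   (-1:ℤ)^m * (cfP Ω m * q - cfQ Ω m * p)] := by
    rw [hk'def, Umat, Umat_inv', hitem]
    funext i
    fin_cases i <;>
      simp [Matrix.mulVec, dotProduct, Fin.sum_univ_two, kzero, Matrix.transpose, hp] <;>
      ring
  have hpair : (k' 0 : ℝ) + (k' 1 : ℝ) * Ω = σ * (lam * r) := by
    rw [hk']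
    push_cast
    rw [hσ]
    push_cast
    linear_combination ((-1:ℝ)^m * (q:ℝ)) * h10 + (-((-1:ℝ)^m) * (p:ℝ)) * h00
  have habs_pair : |(k' 0 : ℝ) + (k' 1 : ℝ) * Ω| = lam * R := by
    rw [hpair, habs_σ, abs_mul, abs_of_pos hlam0, hR]
  have hlamRlt : lam * R < 1/2 := by
    rcases lt_or_eq_of_le hlamR with h | h
    · exact h
    · exfalso
      exact irr_ne_half hirr (k' 0) (k' 1) (by rw [habs_pair, h])
  rcases lt_or_ge q (cfQ Ω m) with hcase | hcase
  · obtain ⟨j, hj2, hjl, hjr⟩ := find_j hirr h0 h1 m q hq1 hcase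
    have hba := best_approx hirr h0 h1 j q p hq1 hjr
    have hlb := cf_err_lb hirr h0 h1 j
    have hmono1 : cfQ Ω (j+2) ≤ cfQ Ω m := cfQ_mono hirr h0 h1 hj2
    have hmono2 : cfQ Ω (j+1) ≤ cfQ Ω m := cfQ_mono hirr h0 h1 (by omega)
    have hm1 : (cfQ Ω (j+2) : ℝ) ≤ B := by rw [hB]; exact_mod_cast hmono1
    have hm2 : (cfQ Ω (j+1) : ℝ) ≤ B := by rw [hB]; exact_mod_cast hmono2
    have hqpos : (0:ℝ) < (cfQ Ω (j+2) : ℝ) + (cfQ Ω (j+1) : ℝ) := by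
      have h1' : (1:ℝ) ≤ (cfQ Ω (j+2) : ℝ) := by exact_mod_cast (cfQ_facts hirr h0 h1 (j+1)).2.2
      have h2' : (1:ℝ) ≤ (cfQ Ω (j+1) : ℝ) := by exact_mod_cast (cfQ_facts hirr h0 h1 j).2.2
      linarith
    have hstep : 1/(2*B) ≤ 1/((cfQ Ω (j+2) : ℝ) + (cfQ Ω (j+1) : ℝ)) := by
      apply one_div_le_one_div_of_le hqpos
      linarith
    have hfin2 : 1/(2*B) < R := by
      calc 1/(2*B) ≤ 1/((cfQ Ω (j+2) : ℝ) + (cfQ Ω (j+1) : ℝ)) := hstep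
        _ < |(cfQ Ω (j+1) : ℝ) * Ω - (cfP Ω (j+1) : ℝ)| := hlb
        _ ≤ |(q:ℝ) * Ω - (p:ℝ)| := hba
        _ = R := by rw [hR, hr]
    have hfin : 1/(2*lam) < 1/(2*B) := by
      apply one_div_lt_one_div_of_lt (by linarith)
      linarith
    linarith
  · set q' : ℤ := (-1:ℤ)^m * (cfP Ω m * q - cfQ Ω m * p) with hq'def
    have hq'cast : lam * (q' : ℝ) = (q:ℝ) + lam * (σ * (B * r)) := by
      have hpr : (p : ℝ) = (q:ℝ)*Ω - r := by rw [hr]; ring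
      rw [hq'def]
      push_cast
      rw [hσ] at hmu hσ2 ⊢
      linear_combination ((q:ℝ) - (q:ℝ)*((-1:ℝ)^m)*((-1:ℝ)^m)) +
        ((-1:ℝ)^m * (q:ℝ)) * hmu + (q:ℝ) * hσ2 + (lam * ((-1:ℝ)^m) * B) * hpr
    have hqB : B ≤ (q:ℝ) := by rw [hB]; exact_mod_cast hcase
    have hBr : |σ * (B * r)| ≤ (q:ℝ) * R := by
      rw [habs_σ, abs_mul, abs_of_nonneg (by linarith : (0:ℝ) ≤ B), hR]
      have := abs_nonneg r
      nlinarith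
    have hq'pos : 0 < (q' : ℝ) := by
      have hneg : -((q:ℝ) * R) ≤ σ * (B * r) := by
        have := neg_abs_le (σ * (B * r))
        linarith
      have h1' : (q:ℝ) - lam * ((q:ℝ) * R) ≤ lam * (q':ℝ) := by
        have := mul_le_mul_of_nonneg_left hneg (le_of_lt hlam0)
        nlinarith
      have h3' : lam * ((q:ℝ) * R) ≤ (1/2) * (q:ℝ) := by
        have := mul_le_mul_of_nonneg_right hlamR (by linarith : (0:ℝ) ≤ (q:ℝ))
        nlinarith
      nlinarith
    have hq'1 : 1 ≤ q' := by
      have : (0:ℤ) < q' := by exact_mod_cast hq'pos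
      omega
    apply hnotinA
    refine ⟨q', hq'1, ?_, ?_⟩
    · funext i
      fin_cases i
      · show k' 0 = kzero Ω q' 0
        have hround : round ((q' : ℝ) * Ω) = -(k' 0) := by
          apply round_eq_of_abs_lt
          have hk'1 : k' 1 = q' := by rw [hk', hq'def]; rfl
          have heq2 : (q' : ℝ) * Ω - ((-(k' 0) : ℤ) : ℝ) = (k' 0 : ℝ) + (k' 1 : ℝ) * Ω := by
            rw [hk'1]; push_cast; ring
          rw [heq2, habs_pair]
          exact hlamRlt
        simp [kzero, p0, hround]
      · show k' 1 = kzero Ω q' 1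
        rw [hk', hq'def]
        rfl
    · show |pairω Ω k'| < 1/2
      rw [pairω, habs_pair]
      exact hlamRlt

set_option maxHeartbeats 1000000 in
/-- Lower bound for the limit numerators: for any primitive `q`,
`γ*_q > ((1+Ω)q − α)/(2λ)` with `α = |b|Ω(1+Ω)/(2|c+bΩ²|)`. -/
theorem splitting_quadratic_stmt10
    (Ω : ℝ) (m : ℕ) (hm : 1 ≤ m) (h0 : 0 < Ω) (h1 : Ω < 1)
    (hquad : IsQuadraticIrrational Ω)
    (hper : gaussOrbit Ω m = Ω)
    (lam : ℝ) (hlam : 1 < lam)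
    (heig : ((cfMatProd Ω m).map fun z : ℤ => (z : ℝ)).mulVec ![1, Ω] = lam • ![1, Ω])
    (q : ℤ) (hq : PrimitiveInt Ω (Umat Ω m) q) :
    ((1 + Ω) * (q : ℝ) -
        |(cfMatProd Ω m 0 1 : ℝ)| * Ω * (1 + Ω) /
          (2 * |(cfMatProd Ω m 1 0 : ℝ) + (cfMatProd Ω m 0 1 : ℝ) * Ω ^ 2|)) /
      (2 * lam) < gammaStarQ Ω m q := by
  obtain ⟨hirr, -⟩ := hquad
  obtain ⟨hq1, hinA, hnotinA⟩ := hq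
  have hitem : cfMatProd Ω m = !![cfQ Ω (m+1), cfQ Ω m; cfP Ω (m+1), cfP Ω m] :=
    cfMatProd_eq m
  have e01 : cfMatProd Ω m 0 1 = cfQ Ω m := by rw [hitem]; rfl
  have e10 : cfMatProd Ω m 1 0 = cfP Ω (m+1) := by rw [hitem]; rfl
  set A : ℝ := (cfQ Ω (m+1) : ℝ) with hA
  set B : ℝ := (cfQ Ω m : ℝ) with hB
  set C : ℝ := (cfP Ω (m+1) : ℝ) with hC
  set D : ℝ := (cfP Ω m : ℝ) with hD
  set σ : ℝ := (-1 : ℝ)^m with hσ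
  have hσcases : σ = 1 ∨ σ = -1 := by
    rcases Nat.even_or_odd m with h | h
    · left; rw [hσ, h.neg_one_pow]
    · right; rw [hσ, h.neg_one_pow]
  have h00 : A + B * Ω = lam := by
    have := congrFun heig 0
    rw [hitem] at this
    simpa [Matrix.mulVec, dotProduct, Fin.sum_univ_two, hA, hB] using this
  have h10 : C + D * Ω = lam * Ω := by
    have := congrFun heig 1
    rw [hitem] at this
    simpa [Matrix.mulVec, dotProduct, Fin.sum_univ_two, hC, hD] using this
  have hB1 : (1:ℝ) ≤ B := by
    rw [hB]; exact_mod_cast (by simpa [Nat.sub_add_cancel hm] using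
      (cfQ_facts hirr h0 h1 (m-1)).2.2 : 1 ≤ cfQ Ω m)
  have hC1 : (1:ℝ) ≤ C := by
    rw [hC]
    exact_mod_cast (by simpa [show m - 1 + 2 = m + 1 by omega] using
      (cfP_facts hirr h0 h1 (m-1)).2.2 : 1 ≤ cfP Ω (m+1))
  have hD0 : (0:ℝ) ≤ D := by
    rw [hD]; exact_mod_cast (cfP_nonneg hirr h0 h1 m).1
  have hDC : D ≤ C := by
    rw [hD, hC]
    exact_mod_cast (by simpa [show m - 1 + 1 = m by omega, show m - 1 + 2 = m + 1 by omega] using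
      (cfP_facts hirr h0 h1 (m-1)).2.1 : cfP Ω m ≤ cfP Ω (m+1))
  have hlam0 : (0:ℝ) < lam := by linarith
  have hdetR : A * D - B * C = σ := by
    have hdz := cf_det (Ω := Ω) m
    have h' : C * B - A * D = (-1:ℝ)^(m+1) := by
      rw [hA, hB, hC, hD]; exact_mod_cast hdz
    have h'' : ((-1:ℝ))^(m+1) = -σ := by rw [hσ, pow_succ]; ring
    rw [h''] at h'
    linarith
  have hmu : lam * (D - B * Ω) = σ := by
    linear_combination (-(D)) * h00 + B * h10 + hdetR
  have hBΩD : B * Ω < D + 1 := by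
    rcases hσcases with h | h <;> rw [h] at hmu <;> nlinarith
  set DEN : ℝ := C + B * Ω^2 with hDEN
  have hDENpos : 0 < DEN := by rw [hDEN]; nlinarith
  have hBΩ2 : B * Ω ≤ 2 * DEN := by rw [hDEN]; nlinarith
  set p : ℤ := p0 Ω q with hp
  set r : ℝ := (q:ℝ) * Ω - (p:ℝ) with hr
  set R : ℝ := |r| with hR
  have hqR : (1:ℝ) ≤ (q:ℝ) := by exact_mod_cast hq1
  have hrne : r ≠ 0 := irr_lin_ne hirr q p (by omega)
  have hRpos : 0 < R := abs_pos.mpr hrne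
  have hR2 : R < 1/2 := by
    obtain ⟨q₂, -, -, habs⟩ := hinA
    have hpq : pairω Ω (kzero Ω q) = r := by
      simp [pairω, kzero, hr, hp]
      ring
    rwa [hpq] at habs
  have hR1 : 1/(2*lam) < R := key_lower Ω m hm h0 h1 hirr lam hlam heig q hq1 hnotinA
  -- final numeric computation
  have hgoalZ : gammaStarQ Ω m q = R * (|C * (q:ℝ) + B * (p:ℝ) * Ω| * (1+Ω) / DEN) := by
    rw [gammaStarQ, KqD, e01, e10, ← hB, ← hC, ← hp, ← hr, ← hR, ← hDEN,
      abs_of_pos hDENpos]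
  have hZeq : C * (q:ℝ) + B * (p:ℝ) * Ω = (q:ℝ) * DEN - B * Ω * r := by
    rw [hDEN, hr]; ring
  have hZabs : (q:ℝ) * DEN - B * Ω * R ≤ |C * (q:ℝ) + B * (p:ℝ) * Ω| := by
    rw [hZeq]
    have h1' : |(q:ℝ) * DEN| - |B * Ω * r| ≤ |(q:ℝ) * DEN - B * Ω * r| :=
      abs_sub_abs_le_abs_sub _ _
    have h2' : |(q:ℝ) * DEN| = (q:ℝ) * DEN := abs_of_pos (by nlinarith)
    have h3' : |B * Ω * r| = B * Ω * R := by
      rw [abs_mul, hR, abs_of_nonneg (by nlinarith : (0:ℝ) ≤ B * Ω)]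
    linarith
  rw [hgoalZ, e01, e10, ← hB, ← hC, ← hDEN, abs_of_pos hDENpos,
    abs_of_nonneg (by linarith : (0:ℝ) ≤ B)]
  have hmono : R * ((((q:ℝ)*DEN - B*Ω*R) * (1+Ω)) / DEN)
      ≤ R * ((|C * (q:ℝ) + B * (p:ℝ) * Ω| * (1+Ω)) / DEN) := by
    apply mul_le_mul_of_nonneg_left _ hRpos.le
    apply (div_le_div_iff_of_pos_right hDENpos).mpr
    exact mul_le_mul_of_nonneg_right hZabs (by linarith : (0:ℝ) ≤ 1+Ω)
  set Cc : ℝ := B*Ω*(1+Ω)/DEN with hCc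
  have hCcpos : 0 < Cc := by
    rw [hCc]; apply div_pos (by nlinarith) hDENpos
  have hCcle : Cc ≤ 2*((q:ℝ)*(1+Ω)) := by
    rw [hCc, div_le_iff₀ hDENpos]
    nlinarith [mul_le_mul_of_nonneg_right hBΩ2 (by linarith : (0:ℝ) ≤ 1+Ω),
      mul_nonneg (mul_nonneg (by linarith : (0:ℝ) ≤ (q:ℝ)-1)
        (by linarith : (0:ℝ) ≤ 2*(1+Ω))) hDENpos.le]
  have hexp : R * ((((q:ℝ)*DEN - B*Ω*R) * (1+Ω)) / DEN)
      = R*(q:ℝ)*(1+Ω) - R^2 * Cc := by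
    rw [hCc]
    field_simp
  have hhalf : B*Ω*(1+Ω)/(2*DEN) = Cc/2 := by
    rw [hCc]; field_simp
  rw [hhalf, div_lt_iff₀ (by linarith : (0:ℝ) < 2*lam)]
  have hkey : ((1+Ω)*(q:ℝ) - Cc/2) < (R*(q:ℝ)*(1+Ω) - R^2*Cc) * (2*lam) := by
    have ha : 0 < 2*lam*R - 1 := by
      rw [div_lt_iff₀ (by linarith : (0:ℝ) < 2*lam)] at hR1
      linarith
    have hb : 0 < (q:ℝ)*(1+Ω) - Cc*R := by
      have h1' : Cc*R < Cc*(1/2) := by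
        apply mul_lt_mul_of_pos_left hR2 hCcpos
      linarith
    nlinarith [mul_pos ha hb, mul_pos hCcpos (by linarith : (0:ℝ) < 1/2 - R)]
  calc ((1+Ω)*(q:ℝ) - Cc/2) < (R*(q:ℝ)*(1+Ω) - R^2*Cc) * (2*lam) := hkey
    _ = R * ((((q:ℝ)*DEN - B*Ω*R) * (1+Ω)) / DEN) * (2*lam) := by rw [hexp]
    _ ≤ R * ((|C * (q:ℝ) + B * (p:ℝ) * Ω| * (1+Ω)) / DEN) * (2*lam) := by
        apply mul_le_mul_of_nonneg_right hmono (by linarith)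
end
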